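/- The sequence u : ℕ → ℚ defined by u_n = Π_{k=1}^{n} k! (the product of the first n factorials, with u_0 = 1) is not P-recursive: there do not exist r ∈ ℕ and polynomials p₀,…,p_r ∈ ℚ[x], not all zero, such that p₀(n)·u_n + p₁(n)·u_{n+1} + ⋯ + p_r(n)·u_{n+r} = 0 for all n ∈ ℕ. -/

import Mathlib

/-- A sequence `u : ℕ → ℚ` is P-recursive if it satisfies a nontrivial linear
recurrence with polynomial coefficients. -/
def IsPRecursive (u : ℕ → ℚ) : Prop :=
  ∃ (r : ℕ) (p : Fin (r + 1) → Polynomial ℚ),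
    (∃ i, p i ≠ 0) ∧
    ∀ n : ℕ, ∑ i : Fin (r + 1), Polynomial.eval (n : ℚ) (p i) * u (n + (i : ℕ)) = 0

/-- Clearing denominators: a rational polynomial takes values in `ℤ / c` at
natural numbers, for a suitable positive natural `c`. -/
lemma exists_int_scale (q : Polynomial ℚ) :
    ∃ c : ℕ, 0 < c ∧ ∀ n : ℕ, ∃ z : ℤ, (c : ℚ) * q.eval (n : ℚ) = (z : ℚ) := by
  classical
  refine ⟨∏ k ∈ q.support, (q.coeff k).den,
    Finset.prod_pos fun k _ => (q.coeff k).pos, fun n => ?_⟩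
  refine ⟨∑ k ∈ q.support,
    (∏ l ∈ q.support.erase k, ((q.coeff l).den : ℤ)) * (q.coeff k).num * (n : ℤ) ^ k, ?_⟩
  rw [Polynomial.eval_eq_sum, Polynomial.sum_def, Finset.mul_sum]
  push_cast
  refine Finset.sum_congr rfl fun k hk => ?_
  have h1 : (∏ k ∈ q.support, ((q.coeff k).den : ℚ)) =
      ((q.coeff k).den : ℚ) * ∏ l ∈ q.support.erase k, ((q.coeff l).den : ℚ) :=
    (Finset.mul_prod_erase _ _ hk).symm
  have h2 : ((q.coeff k).den : ℚ) * q.coeff k = (q.coeff k).num := Rat.den_mul_eq_num _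
  rw [h1, show (((q.coeff k).den : ℚ) * ∏ l ∈ q.support.erase k, ((q.coeff l).den : ℚ)) *
      (q.coeff k * (n : ℚ) ^ k) =
      (∏ l ∈ q.support.erase k, ((q.coeff l).den : ℚ)) *
        (((q.coeff k).den : ℚ) * q.coeff k) * (n : ℚ) ^ k by ring, h2]

/-- Polynomial values at naturals are polynomially bounded. -/
lemma eval_le_bound (q : Polynomial ℚ) (D : ℕ) (hD : q.natDegree ≤ D) :
    ∃ C : ℕ, ∀ n : ℕ, 1 ≤ n → |q.eval (n : ℚ)| ≤ (C : ℚ) * (n : ℚ) ^ D := by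
  refine ⟨∑ k ∈ Finset.range (q.natDegree + 1), ⌈|q.coeff k|⌉₊, fun n hn => ?_⟩
  have hn1 : (1 : ℚ) ≤ (n : ℚ) := by exact_mod_cast hn
  rw [Polynomial.eval_eq_sum_range]
  calc |∑ k ∈ Finset.range (q.natDegree + 1), q.coeff k * (n : ℚ) ^ k|
      ≤ ∑ k ∈ Finset.range (q.natDegree + 1), |q.coeff k * (n : ℚ) ^ k| :=
        Finset.abs_sum_le_sum_abs _ _
    _ ≤ ∑ k ∈ Finset.range (q.natDegree + 1), (⌈|q.coeff k|⌉₊ : ℚ) * (n : ℚ) ^ D := by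
        refine Finset.sum_le_sum fun k hk => ?_
        rw [abs_mul, abs_pow, abs_of_nonneg (by positivity : (0:ℚ) ≤ (n:ℚ))]
        have hkD : k ≤ D := by
          have := Finset.mem_range.mp hk; omega
        have h1 : |q.coeff k| ≤ (⌈|q.coeff k|⌉₊ : ℚ) := Nat.le_ceil _
        have h2 : (n : ℚ) ^ k ≤ (n : ℚ) ^ D := pow_le_pow_right₀ hn1 hkD
        have h3 : (0:ℚ) ≤ (n : ℚ) ^ k := by positivity
        exact mul_le_mul h1 h2 h3 (by positivity)
    _ = ((∑ k ∈ Finset.range (q.natDegree + 1), ⌈|q.coeff k|⌉₊ : ℕ) : ℚ) * (n : ℚ) ^ D := by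
        rw [← Finset.sum_mul]; push_cast; ring

/-- A nonzero rational polynomial is eventually nonvanishing at naturals. -/
lemma exists_nonroot_bound (q : Polynomial ℚ) (hq : q ≠ 0) :
    ∃ B : ℕ, ∀ n : ℕ, B ≤ n → q.eval (n : ℚ) ≠ 0 := by
  have h : {n : ℕ | q.eval (n : ℚ) = 0}.Finite := by
    have := (Polynomial.finite_setOf_isRoot hq).preimage
      (f := fun n : ℕ => (n : ℚ)) (Nat.cast_injective.injOn)
    exact this
  obtain ⟨B, hB⟩ := h.bddAbove
  exact ⟨B + 1, fun n hn h0 => by have := hB h0; omega⟩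

/-- The factorial eventually dominates any fixed polynomial growth. -/
lemma fact_dom (A D : ℕ) : ∃ N : ℕ, ∀ n : ℕ, N ≤ n → A * n ^ D < (n + 1).factorial := by
  set E := A * 2 ^ D with hE
  refine ⟨E + 2 * D + 2, fun n hn => ?_⟩
  set s := n - D with hs
  have hn2s : n ≤ 2 * s := by omega
  have h1 : s + 1 + D = n + 1 := by omega
  have h2 : (s + 1).factorial * (s + 2) ^ D ≤ (n + 1).factorial := by
    rw [← h1]; exact Nat.factorial_mul_pow_le_factorial
  calc A * n ^ D ≤ A * (2 * s) ^ D := by gcongr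
    _ = E * s ^ D := by rw [hE, mul_pow]; ring
    _ ≤ E * (s + 2) ^ D := by
        gcongr
        omega
    _ < (s + 1) * (s + 2) ^ D := by
        have hpos : 0 < (s + 2) ^ D := by positivity
        exact Nat.mul_lt_mul_of_lt_of_le (by omega) le_rfl hpos
    _ ≤ (s + 1).factorial * (s + 2) ^ D := by
        gcongr; exact Nat.self_le_factorial _
    _ ≤ (n + 1).factorial := h2

/-- **The superfactorials are not P-recursive**: the sequence
`u_n = ∏_{k=1}^n k!` satisfies no nontrivial linear recurrence with polynomial
coefficients. -/
theorem superfactorial_not_pRecursive :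
    ¬ IsPRecursive (fun n => ∏ k ∈ Finset.Icc 1 n, (Nat.factorial k : ℚ)) := by
  classical
  rintro ⟨r, p, ⟨i0, hi0⟩, hrec⟩
  set u : ℕ → ℚ := fun n => ∏ k ∈ Finset.Icc 1 n, (Nat.factorial k : ℚ) with hu
  have upos : ∀ n, 0 < u n := fun n => Finset.prod_pos fun k _ => by positivity
  have usucc : ∀ n, u (n + 1) = u n * ((n + 1).factorial : ℚ) := fun n =>
    Finset.prod_Icc_succ_top (by omega) _
  have hfact1 : ∀ m : ℕ, (1 : ℚ) ≤ (m.factorial : ℚ) := fun m => by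
    exact_mod_cast Nat.one_le_iff_ne_zero.mpr (Nat.factorial_ne_zero m)
  have umono : Monotone u := monotone_nat_of_le_succ fun n => by
    rw [usucc]
    nlinarith [upos n, hfact1 (n + 1)]
  have ugrow : ∀ (n i j : ℕ), i < j →
      ((n + 1).factorial : ℚ) * u (n + i) ≤ u (n + j) := by
    intro n i j hij
    have h1 : ((n + 1).factorial : ℚ) * u (n + i) ≤ u (n + i + 1) := by
      rw [usucc]
      have hf : ((n + 1).factorial : ℚ) ≤ ((n + i + 1).factorial : ℚ) := by
        exact_mod_cast Nat.factorial_le (by omega)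
      nlinarith [upos (n + i)]
    exact h1.trans (umono (by omega))
  -- the top nonzero coefficient
  set S : Finset (Fin (r + 1)) := Finset.univ.filter fun i => p i ≠ 0 with hS
  have hSne : S.Nonempty := ⟨i0, by simp [hS, hi0]⟩
  set j := S.max' hSne with hj
  have hpj : p j ≠ 0 := by have := S.max'_mem hSne; simpa [hS] using this
  have hmax : ∀ i : Fin (r + 1), p i ≠ 0 → i ≤ j := fun i hi =>
    S.le_max' i (by simp [hS, hi])
  -- quantitative bounds
  obtain ⟨c, hc0, hcint⟩ := exists_int_scale (p j)
  obtain ⟨B, hB⟩ := exists_nonroot_bound (p j) hpj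
  set D : ℕ := Finset.univ.sup fun i : Fin (r + 1) => (p i).natDegree with hD
  choose C hC using fun i : Fin (r + 1) =>
    eval_le_bound (p i) D (hD ▸ Finset.le_sup (f := fun i : Fin (r + 1) => (p i).natDegree) (Finset.mem_univ i))
  set Ct : ℕ := ∑ i : Fin (r + 1), C i with hCt
  obtain ⟨N, hN⟩ := fact_dom (c * Ct) D
  set n := max (max N B) 1 with hn
  have hn1 : 1 ≤ n := le_max_right _ _
  have hnN : N ≤ n := le_trans (le_max_left _ _) (le_max_left _ _)
  have hnB : B ≤ n := le_trans (le_max_right _ _) (le_max_left _ _)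
  -- step 1 : 1 ≤ c * |p j (n)|
  have step1 : (1 : ℚ) ≤ (c : ℚ) * |(p j).eval (n : ℚ)| := by
    obtain ⟨z, hz⟩ := hcint n
    have hz0 : z ≠ 0 := by
      intro h0
      apply hB n hnB
      have hc0' : (c : ℚ) ≠ 0 := by exact_mod_cast hc0.ne'
      rw [h0, Int.cast_zero] at hz
      exact (mul_eq_zero.mp hz).resolve_left hc0'
    have : (1 : ℚ) ≤ |(z : ℚ)| := by
      rw [← Int.cast_abs]
      exact_mod_cast Int.one_le_abs (by exact_mod_cast hz0)
    calc (1 : ℚ) ≤ |(z : ℚ)| := this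
      _ = |(c : ℚ) * (p j).eval (n : ℚ)| := by rw [hz]
      _ = (c : ℚ) * |(p j).eval (n : ℚ)| := by
          rw [abs_mul, abs_of_nonneg (by positivity : (0:ℚ) ≤ (c:ℚ))]
  -- step 2 : the recurrence bounds |p j (n)| * u (n+j)
  have hsplit : (p j).eval (n : ℚ) * u (n + (j : ℕ)) +
      ∑ i ∈ Finset.univ.erase j, (p i).eval (n : ℚ) * u (n + (i : ℕ)) = 0 := by
    exact (Finset.add_sum_erase Finset.univ
      (fun i : Fin (r + 1) => (p i).eval (n : ℚ) * u (n + (i : ℕ)))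
      (Finset.mem_univ j)).trans (hrec n)
  have step2 : |(p j).eval (n : ℚ)| * u (n + (j : ℕ)) ≤
      ∑ i ∈ Finset.univ.erase j, |(p i).eval (n : ℚ)| * u (n + (i : ℕ)) := by
    have h1 : (p j).eval (n : ℚ) * u (n + (j : ℕ)) =
        -∑ i ∈ Finset.univ.erase j, (p i).eval (n : ℚ) * u (n + (i : ℕ)) := by
      linarith [hsplit]
    calc |(p j).eval (n : ℚ)| * u (n + (j : ℕ))
        = |(p j).eval (n : ℚ) * u (n + (j : ℕ))| := by
          rw [abs_mul, abs_of_pos (upos _)]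
      _ = |∑ i ∈ Finset.univ.erase j, (p i).eval (n : ℚ) * u (n + (i : ℕ))| := by
          rw [h1, abs_neg]
      _ ≤ ∑ i ∈ Finset.univ.erase j, |(p i).eval (n : ℚ) * u (n + (i : ℕ))| :=
          Finset.abs_sum_le_sum_abs _ _
      _ = ∑ i ∈ Finset.univ.erase j, |(p i).eval (n : ℚ)| * u (n + (i : ℕ)) := by
          refine Finset.sum_congr rfl fun i _ => ?_
          rw [abs_mul, abs_of_pos (upos _)]
  -- step 3 : multiply by (n+1)! and use the growth of u
  have step3 : ((n + 1).factorial : ℚ) *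
      ∑ i ∈ Finset.univ.erase j, |(p i).eval (n : ℚ)| * u (n + (i : ℕ)) ≤
      (∑ i ∈ Finset.univ.erase j, |(p i).eval (n : ℚ)|) * u (n + (j : ℕ)) := by
    rw [Finset.mul_sum, Finset.sum_mul]
    refine Finset.sum_le_sum fun i hi => ?_
    by_cases hpi : p i = 0
    · simp [hpi]
    · have hij : (i : ℕ) < (j : ℕ) := by
        have h1 : i ≤ j := hmax i hpi
        have h2 : i ≠ j := Finset.ne_of_mem_erase hi
        exact Fin.lt_iff_val_lt_val.mp (lt_of_le_of_ne h1 h2)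
      have := ugrow n i j hij
      have habs : (0:ℚ) ≤ |(p i).eval (n : ℚ)| := abs_nonneg _
      calc ((n + 1).factorial : ℚ) * (|(p i).eval (n : ℚ)| * u (n + (i : ℕ)))
          = |(p i).eval (n : ℚ)| * (((n + 1).factorial : ℚ) * u (n + (i : ℕ))) := by ring
        _ ≤ |(p i).eval (n : ℚ)| * u (n + (j : ℕ)) := by
            exact mul_le_mul_of_nonneg_left this habs
  -- step 4 : sum of |p i (n)| is polynomially bounded
  have step4 : ∑ i ∈ Finset.univ.erase j, |(p i).eval (n : ℚ)| ≤
      (Ct : ℚ) * (n : ℚ) ^ D := by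
    calc ∑ i ∈ Finset.univ.erase j, |(p i).eval (n : ℚ)|
        ≤ ∑ i : Fin (r + 1), |(p i).eval (n : ℚ)| :=
          Finset.sum_le_sum_of_subset_of_nonneg (Finset.erase_subset _ _)
            (fun i _ _ => abs_nonneg _)
      _ ≤ ∑ i : Fin (r + 1), (C i : ℚ) * (n : ℚ) ^ D :=
          Finset.sum_le_sum fun i _ => hC i n hn1
      _ = (Ct : ℚ) * (n : ℚ) ^ D := by
          rw [← Finset.sum_mul, hCt]; push_cast; ring
  -- combine everything
  have key : |(p j).eval (n : ℚ)| * ((n + 1).factorial : ℚ) ≤ (Ct : ℚ) * (n : ℚ) ^ D := by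
    have hup : 0 < u (n + (j : ℕ)) := upos _
    have h5 : |(p j).eval (n : ℚ)| * u (n + (j : ℕ)) * ((n + 1).factorial : ℚ) ≤
        (∑ i ∈ Finset.univ.erase j, |(p i).eval (n : ℚ)|) * u (n + (j : ℕ)) := by
      have hf0 : (0:ℚ) < ((n + 1).factorial : ℚ) := by
        exact_mod_cast Nat.factorial_pos (n + 1)
      calc |(p j).eval (n : ℚ)| * u (n + (j : ℕ)) * ((n + 1).factorial : ℚ)
          ≤ (∑ i ∈ Finset.univ.erase j, |(p i).eval (n : ℚ)| * u (n + (i : ℕ))) *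
              ((n + 1).factorial : ℚ) := by
            exact mul_le_mul_of_nonneg_right step2 hf0.le
        _ = ((n + 1).factorial : ℚ) *
              ∑ i ∈ Finset.univ.erase j, |(p i).eval (n : ℚ)| * u (n + (i : ℕ)) := by ring
        _ ≤ (∑ i ∈ Finset.univ.erase j, |(p i).eval (n : ℚ)|) * u (n + (j : ℕ)) := step3
    have h6 : |(p j).eval (n : ℚ)| * ((n + 1).factorial : ℚ) ≤
        ∑ i ∈ Finset.univ.erase j, |(p i).eval (n : ℚ)| := by
      rw [← mul_le_mul_iff_of_pos_right hup]
      calc |(p j).eval (n : ℚ)| * ((n + 1).factorial : ℚ) * u (n + (j : ℕ))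
          = |(p j).eval (n : ℚ)| * u (n + (j : ℕ)) * ((n + 1).factorial : ℚ) := by ring
        _ ≤ _ := h5
    exact h6.trans step4
  have final : ((n + 1).factorial : ℚ) ≤ ((c * Ct : ℕ) : ℚ) * (n : ℚ) ^ D := by
    have hf0 : (0:ℚ) ≤ ((n + 1).factorial : ℚ) := by positivity
    calc ((n + 1).factorial : ℚ) = 1 * ((n + 1).factorial : ℚ) := (one_mul _).symm
      _ ≤ ((c : ℚ) * |(p j).eval (n : ℚ)|) * ((n + 1).factorial : ℚ) :=
          mul_le_mul_of_nonneg_right step1 hf0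
      _ = (c : ℚ) * (|(p j).eval (n : ℚ)| * ((n + 1).factorial : ℚ)) := by ring
      _ ≤ (c : ℚ) * ((Ct : ℚ) * (n : ℚ) ^ D) := by
          exact mul_le_mul_of_nonneg_left key (by positivity)
      _ = ((c * Ct : ℕ) : ℚ) * (n : ℚ) ^ D := by push_cast; ring
  have hlt : ((c * Ct : ℕ) : ℚ) * (n : ℚ) ^ D < ((n + 1).factorial : ℚ) := by
    exact_mod_cast hN n hnN
  linarith
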